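/- For every β > 0, ∫₀^L ( 1/β + β·‖γ''(t)‖² ) dt ≥ 4π; in particular ∫₀^L ( 1 + ‖γ''(t)‖² ) dt ≥ 4π. Moreover, ∫₀^L ‖γ''(t)‖² dt ≥ 4π²/L. -/

import Mathlib

open MeasureTheory Filter Set Topology intervalIntegral
open scoped RealInnerProductSpace

noncomputable abbrev E2 := EuclideanSpace ℝ (Fin 2)

noncomputable def Jrot (w : E2) : E2 := (WithLp.equiv 2 (Fin 2 → ℝ)).symm ![-(w 1), w 0]

@[simp] lemma Jrot_apply0 (w : E2) : Jrot w 0 = -(w 1) := rfl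
@[simp] lemma Jrot_apply1 (w : E2) : Jrot w 1 = w 0 := rfl

lemma inner_E2 (x y : E2) : ⟪x, y⟫ = x 0 * y 0 + x 1 * y 1 := by
  simp [PiLp.inner_apply, Fin.sum_univ_two]; ring

lemma inner_J_J (x y : E2) : ⟪Jrot x, Jrot y⟫ = ⟪x, y⟫ := by
  simp [inner_E2]; ring

lemma inner_J_skew (x y : E2) : ⟪Jrot x, y⟫ = - ⟪x, Jrot y⟫ := by
  simp [inner_E2]

lemma norm_sq_E2 (x : E2) : ‖x‖ ^ 2 = x 0 ^ 2 + x 1 ^ 2 := by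
  rw [← real_inner_self_eq_norm_sq, inner_E2]; ring

lemma norm_Jrot (w : E2) : ‖Jrot w‖ = ‖w‖ := by
  have h1 : ‖Jrot w‖ ^ 2 = ‖w‖ ^ 2 := by rw [norm_sq_E2, norm_sq_E2]; simp; ring
  nlinarith [norm_nonneg (Jrot w), norm_nonneg w]

lemma continuous_Jrot : Continuous Jrot := by
  refine Continuous.comp (by continuity) ?_
  refine continuous_pi fun i => ?_
  fin_cases i
  · exact ((continuous_apply (1 : Fin 2)).comp (PiLp.continuous_ofLp 2 _)).neg
  · exact (continuous_apply (0 : Fin 2)).comp (PiLp.continuous_ofLp 2 _)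

lemma osc_lemma (L : ℝ) (hL : 0 < L) (θ : ℝ → ℝ) (hθc : Continuous θ)
    (hA : (∫ t in (0:ℝ)..L, Real.cos (θ t)) = 0)
    (hB : (∫ t in (0:ℝ)..L, Real.sin (θ t)) = 0)
    (t₁ t₂ : ℝ) (h1 : t₁ ∈ Set.Icc 0 L) (h2 : t₂ ∈ Set.Icc 0 L)
    (hmax : ∀ x ∈ Set.Icc (0:ℝ) L, θ x ≤ θ t₁)
    (hmin : ∀ x ∈ Set.Icc (0:ℝ) L, θ t₂ ≤ θ x) :
    Real.pi ≤ θ t₁ - θ t₂ := by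
  by_contra hcon
  push_neg at hcon
  have hpos : ∀ x ∈ Set.Ioo (0:ℝ) L, 0 < Real.cos (θ x - (θ t₁ + θ t₂) / 2) := by
    intro x hx
    have hxI := Set.Ioo_subset_Icc_self hx
    apply Real.cos_pos_of_mem_Ioo
    constructor
    · have := hmin x hxI; linarith
    · have := hmax x hxI; linarith
  have hcont : Continuous fun t => Real.cos (θ t - (θ t₁ + θ t₂) / 2) :=
    Real.continuous_cos.comp (hθc.sub continuous_const)
  have hi1 : IntervalIntegrable (fun t => Real.cos (θ t) * Real.cos ((θ t₁ + θ t₂) / 2))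
      volume 0 L :=
    ((Real.continuous_cos.comp hθc).mul continuous_const).intervalIntegrable 0 L
  have hi2 : IntervalIntegrable (fun t => Real.sin (θ t) * Real.sin ((θ t₁ + θ t₂) / 2))
      volume 0 L :=
    ((Real.continuous_sin.comp hθc).mul continuous_const).intervalIntegrable 0 L
  have hint0 : (∫ t in (0:ℝ)..L, Real.cos (θ t - (θ t₁ + θ t₂) / 2)) = 0 := by
    have heq : (fun t => Real.cos (θ t - (θ t₁ + θ t₂) / 2)) =
        fun t => Real.cos (θ t) * Real.cos ((θ t₁ + θ t₂) / 2) +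
          Real.sin (θ t) * Real.sin ((θ t₁ + θ t₂) / 2) :=
      funext fun t => Real.cos_sub _ _
    rw [heq, intervalIntegral.integral_add hi1 hi2,
      intervalIntegral.integral_mul_const, intervalIntegral.integral_mul_const, hA, hB]
    ring
  have hposint := intervalIntegral.intervalIntegral_pos_of_pos_on
    (hcont.intervalIntegrable 0 L) hpos hL
  rw [hint0] at hposint
  exact lt_irrefl 0 hposint

set_option maxHeartbeats 2000000 in
lemma key_ineq (L : ℝ) (hL : 0 < L) (v : ℝ → E2)
    (hv : ContDiffOn ℝ 1 v (Set.Icc 0 L))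
    (hnorm : ∀ t ∈ Set.Icc (0:ℝ) L, ‖v t‖ = 1)
    (hper : v 0 = v L)
    (hzero : (∫ t in (0:ℝ)..L, v t) = 0) :
    2 * Real.pi ≤ ∫ t in (0:ℝ)..L, ‖derivWithin v (Set.Icc 0 L) t‖ := by
  have hUD : UniqueDiffOn ℝ (Set.Icc (0:ℝ) L) := uniqueDiffOn_Icc hL
  set I : Set ℝ := Set.Icc 0 L with hI
  set v' : ℝ → E2 := fun t => derivWithin v I t with hv'def
  have hvd : ∀ t ∈ I, HasDerivWithinAt v (v' t) I t := fun t ht =>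
    ((hv.differentiableOn (by norm_num)) t ht).hasDerivWithinAt
  have hv'c : ContinuousOn v' I := hv.continuousOn_derivWithin hUD le_rfl
  -- orthogonality of v and v'
  have orth : ∀ t ∈ I, ⟪v t, v' t⟫ = 0 := by
    intro t ht
    have h1 : HasDerivWithinAt (fun s => ⟪v s, v s⟫) (⟪v t, v' t⟫ + ⟪v' t, v t⟫) I t :=
      (hvd t ht).inner ℝ (hvd t ht)
    have h2 : HasDerivWithinAt (fun _ : ℝ => (1:ℝ)) (⟪v t, v' t⟫ + ⟪v' t, v t⟫) I t := by
      refine h1.congr (fun s hs => ?_) ?_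
      · rw [real_inner_self_eq_norm_sq, hnorm s hs]; norm_num
      · rw [real_inner_self_eq_norm_sq, hnorm t ht]; norm_num
    have h3 := h2.derivWithin (hUD t ht)
    rw [derivWithin_fun_const, Pi.zero_apply] at h3
    · rw [real_inner_comm]; linarith [h3, real_inner_comm (v t) (v' t)]
  -- signed curvature
  set k : ℝ → ℝ := fun t => ⟪v' t, Jrot (v t)⟫ with hkdef
  have hkc : ContinuousOn k I :=
    ContinuousOn.inner hv'c (continuous_Jrot.comp_continuousOn hv.continuousOn)
  have hnorm2 : ∀ t ∈ I, (v t 0) ^ 2 + (v t 1) ^ 2 = 1 := by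
    intro t ht; rw [← norm_sq_E2, hnorm t ht]; norm_num
  -- expansion of v' in the orthonormal basis (v, Jrot v)
  have hexp : ∀ t ∈ I, v' t = k t • Jrot (v t) := by
    intro t ht
    have ho := orth t ht
    rw [inner_E2] at ho
    have hn := hnorm2 t ht
    have hk : k t = v' t 0 * (-(v t 1)) + v' t 1 * (v t 0) := by
      simp only [hkdef, inner_E2, Jrot_apply0, Jrot_apply1]
    ext i
    fin_cases i
    · show v' t 0 = (k t • Jrot (v t)) 0
      rw [PiLp.smul_apply, Jrot_apply0, hk, smul_eq_mul]
      linear_combination v t 0 * ho - v' t 0 * hn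
    · show v' t 1 = (k t • Jrot (v t)) 1
      rw [PiLp.smul_apply, Jrot_apply1, hk, smul_eq_mul]
      linear_combination v t 1 * ho - v' t 1 * hn
  have hnormk : ∀ t ∈ I, ‖v' t‖ = |k t| := by
    intro t ht
    rw [hexp t ht, norm_smul, norm_Jrot, hnorm t ht, Real.norm_eq_abs, mul_one]
  -- initial angle
  have h0I : (0:ℝ) ∈ I := Set.left_mem_Icc.2 hL.le
  have hLI : L ∈ I := Set.right_mem_Icc.2 hL.le
  set z : ℂ := ⟨v 0 0, v 0 1⟩ with hzdef
  have hzabs : ‖z‖ = 1 := by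
    rw [Complex.norm_def, Complex.normSq_mk]
    have := hnorm2 0 h0I
    rw [show v 0 0 * v 0 0 + v 0 1 * v 0 1 = v 0 0 ^2 + v 0 1 ^2 by ring, this, Real.sqrt_one]
  have hzne : z ≠ 0 := by
    intro h; rw [h] at hzabs; simp at hzabs
  set θ₀ : ℝ := Complex.arg z with hθ₀def
  have hcos0 : Real.cos θ₀ = v 0 0 := by
    rw [hθ₀def, Complex.cos_arg hzne, hzabs]; simp [hzdef]
  have hsin0 : Real.sin θ₀ = v 0 1 := by
    rw [hθ₀def, Complex.sin_arg, hzabs]; simp [hzdef]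
  -- extended curvature and angle function
  set kext : ℝ → ℝ := Set.IccExtend hL.le (I.restrict k) with hkext
  have hkextc : Continuous kext := hkc.restrict.Icc_extend'
  have hkexteq : ∀ t ∈ I, kext t = k t := by
    intro t ht; rw [hkext, Set.IccExtend_of_mem hL.le _ ht]; rfl
  set θ : ℝ → ℝ := fun t => θ₀ + ∫ s in (0:ℝ)..t, kext s with hθdef
  have hθd : ∀ t : ℝ, HasDerivAt θ (kext t) t := by
    intro t
    exact ((intervalIntegral.integral_hasDerivAt_right
      (hkextc.intervalIntegrable _ _)
      hkextc.stronglyMeasurable.stronglyMeasurableAtFilter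
      hkextc.continuousAt)).const_add θ₀
  have hθc : Continuous θ := by
    rw [continuous_iff_continuousAt]; exact fun t => (hθd t).continuousAt
  have hθ0 : θ 0 = θ₀ := by simp [hθdef]
  -- the comparison curve c
  set c : ℝ → E2 := fun t =>
    (WithLp.equiv 2 (Fin 2 → ℝ)).symm ![Real.cos (θ t), Real.sin (θ t)] with hcdef
  have hc0 : ∀ t, c t 0 = Real.cos (θ t) := fun t => rfl
  have hc1 : ∀ t, c t 1 = Real.sin (θ t) := fun t => rfl
  have hcnorm : ∀ t, ‖c t‖ = 1 := by
    intro t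
    have : ‖c t‖ ^ 2 = 1 := by
      rw [norm_sq_E2, hc0, hc1]
      exact Real.cos_sq_add_sin_sq (θ t)
    nlinarith [norm_nonneg (c t)]
  have hcd : ∀ t : ℝ, HasDerivAt c (kext t • Jrot (c t)) t := by
    intro t
    have h1 : HasDerivAt (fun s => Real.cos (θ s)) (-Real.sin (θ t) * kext t) t :=
      (Real.hasDerivAt_cos (θ t)).comp t (hθd t)
    have h2 : HasDerivAt (fun s => Real.sin (θ s)) (Real.cos (θ t) * kext t) t :=
      (Real.hasDerivAt_sin (θ t)).comp t (hθd t)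
    have hpi : HasDerivAt (fun s => ![Real.cos (θ s), Real.sin (θ s)] : ℝ → (Fin 2 → ℝ))
        ![-Real.sin (θ t) * kext t, Real.cos (θ t) * kext t] t := by
      rw [hasDerivAt_pi]
      intro i
      fin_cases i
      · simpa using h1
      · simpa using h2
    have e := (PiLp.continuousLinearEquiv 2 ℝ (fun _ : Fin 2 => ℝ)).symm
    have hcomp := (PiLp.continuousLinearEquiv 2 ℝ (fun _ : Fin 2 => ℝ)).symm.toContinuousLinearMap.hasFDerivAt.comp_hasDerivAt t hpi
    convert hcomp using 1
    · rfl
    · rfl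
    · rfl
    · rfl
    ext i
    fin_cases i
    · show (kext t • Jrot (c t)) 0 = _
      rw [PiLp.smul_apply, Jrot_apply0, hc1, smul_eq_mul]
      show kext t * (-Real.sin (θ t)) = ![-Real.sin (θ t) * kext t, Real.cos (θ t) * kext t] 0
      simp [mul_comm]
    · show (kext t • Jrot (c t)) 1 = _
      rw [PiLp.smul_apply, Jrot_apply1, hc0, smul_eq_mul]
      show kext t * (Real.cos (θ t)) = ![-Real.sin (θ t) * kext t, Real.cos (θ t) * kext t] 1
      simp [mul_comm]
  -- the function g = ⟪v, c⟫ is constant 1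
  set g : ℝ → ℝ := fun t => ⟪v t, c t⟫ with hgdef
  have hgd : ∀ t ∈ I, HasDerivWithinAt g 0 I t := by
    intro t ht
    have h := (hvd t ht).inner ℝ (hcd t).hasDerivWithinAt
    have heq : ⟪v t, kext t • Jrot (c t)⟫ + ⟪v' t, c t⟫ = 0 := by
      rw [hexp t ht, hkexteq t ht, real_inner_smul_right, real_inner_smul_left,
        inner_J_skew (v t) (c t)]
      ring
    rw [heq] at h
    exact h
  have hg1 : ∀ t ∈ I, g t = 1 := by
    have hdiff : DifferentiableOn ℝ g I := fun t ht => ((hgd t ht).differentiableWithinAt)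
    have hzero' : ∀ t ∈ Set.Ico (0:ℝ) L, derivWithin g I t = 0 := fun t ht =>
      (hgd t (Set.mem_Icc_of_Ico ht)).derivWithin (hUD t (Set.mem_Icc_of_Ico ht))
    intro t ht
    have := constant_of_derivWithin_zero hdiff hzero' t ht
    rw [this]
    show ⟪v 0, c 0⟫ = 1
    rw [inner_E2, hc0, hc1, hθ0, hcos0, hsin0]
    have := hnorm2 0 h0I
    nlinarith [this]
  -- v coincides with c on I
  have hveq : ∀ t ∈ I, v t = c t := by
    intro t ht
    have hsq : ‖v t - c t‖ ^ 2 = 0 := by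
      rw [norm_sub_sq_real, hnorm t ht, hcnorm t]
      have := hg1 t ht
      rw [hgdef] at this
      simp only at this
      rw [this]; ring
    have : ‖v t - c t‖ = 0 := by
      have h := pow_eq_zero_iff (n := 2) (by norm_num) |>.1 hsq
      exact h
    rwa [norm_sub_eq_zero_iff] at this
  -- integrals of cos θ and sin θ vanish
  have huIcc : Set.uIcc (0:ℝ) L = I := Set.uIcc_of_le hL.le
  have hvint : IntervalIntegrable v volume 0 L := by
    apply ContinuousOn.intervalIntegrable
    rw [huIcc]; exact hv.continuousOn
  have hcomp : ∀ i : Fin 2, (∫ t in (0:ℝ)..L, v t i) = 0 := by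
    intro i
    have := (EuclideanSpace.proj (𝕜 := ℝ) i).intervalIntegral_comp_comm hvint
    rw [hzero] at this
    simpa using this
  have hA : (∫ t in (0:ℝ)..L, Real.cos (θ t)) = 0 := by
    have h : (∫ t in (0:ℝ)..L, Real.cos (θ t)) = ∫ t in (0:ℝ)..L, v t 0 := by
      apply intervalIntegral.integral_congr
      intro t ht
      rw [huIcc] at ht
      show Real.cos (θ t) = v t 0
      rw [hveq t ht, hc0]
    rw [h, hcomp 0]
  have hB : (∫ t in (0:ℝ)..L, Real.sin (θ t)) = 0 := by
    have h : (∫ t in (0:ℝ)..L, Real.sin (θ t)) = ∫ t in (0:ℝ)..L, v t 1 := by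
      apply intervalIntegral.integral_congr
      intro t ht
      rw [huIcc] at ht
      show Real.sin (θ t) = v t 1
      rw [hveq t ht, hc1]
    rw [h, hcomp 1]
  -- θ L and θ 0 differ by a multiple of 2π
  have hcoseq : Real.cos (θ L) = Real.cos (θ 0) ∧ Real.sin (θ L) = Real.sin (θ 0) := by
    have h1 : c L = c 0 := by rw [← hveq L hLI, ← hveq 0 h0I, hper]
    constructor
    · rw [← hc0, ← hc0, h1]
    · rw [← hc1, ← hc1, h1]
  have hperiod : ∃ n : ℤ, θ L = θ 0 + n * (2 * Real.pi) := by
    have hexp : Complex.exp (θ L * Complex.I) = Complex.exp (θ 0 * Complex.I) := by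
      rw [Complex.exp_mul_I, Complex.exp_mul_I, ← Complex.ofReal_cos, ← Complex.ofReal_sin,
        ← Complex.ofReal_cos, ← Complex.ofReal_sin, hcoseq.1, hcoseq.2]
    obtain ⟨n, hn⟩ := Complex.exp_eq_exp_iff_exists_int.1 hexp
    refine ⟨n, ?_⟩
    have h2 : ((θ L - (θ 0 + n * (2*Real.pi)) : ℝ) : ℂ) * Complex.I = 0 := by
      push_cast
      linear_combination hn
    have h3 : ((θ L - (θ 0 + n * (2*Real.pi)) : ℝ) : ℂ) = 0 := by
      rcases mul_eq_zero.1 h2 with h | h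
      · exact h
      · exact absurd h Complex.I_ne_zero
    have h4 := Complex.ofReal_eq_zero.1 h3
    linarith
  -- integrability of |k| on subintervals
  have hsubI : ∀ a b, a ∈ I → b ∈ I → Set.uIcc a b ⊆ I := by
    intro a b ha hb
    rw [← huIcc] at ha hb ⊢
    exact Set.uIcc_subset_uIcc ha hb
  have hkabs_int : ∀ a b, a ∈ I → b ∈ I → IntervalIntegrable (fun t => |k t|) volume a b := by
    intro a b ha hb
    exact ((hkc.mono (hsubI a b ha hb)).abs).intervalIntegrable
  -- variation bound
  have hKge : ∀ a b, a ∈ I → b ∈ I → a ≤ b → |θ b - θ a| ≤ ∫ t in a..b, |k t| := by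
    intro a b ha hb hab
    have h1 : θ b - θ a = ∫ t in a..b, kext t := by
      have := intervalIntegral.integral_interval_sub_left (μ := volume)
        (hkextc.intervalIntegrable 0 b) (hkextc.intervalIntegrable 0 a)
      simp only [hθdef]
      rw [← this]
      ring
    have h2 : |∫ t in a..b, kext t| ≤ ∫ t in a..b, |kext t| :=
      intervalIntegral.abs_integral_le_integral_abs hab
    have h3 : (∫ t in a..b, |kext t|) = ∫ t in a..b, |k t| := by
      apply intervalIntegral.integral_congr
      intro t ht
      have : t ∈ I := hsubI a b ha hb ht
      simp only [hkexteq t this]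
    rw [h1]
    rw [h3] at h2
    exact h2
  obtain ⟨n, hn⟩ := hperiod
  have hgoal : 2 * Real.pi ≤ ∫ t in (0:ℝ)..L, |k t| := by
    rcases eq_or_ne n 0 with hn0 | hn0
    · -- zero winding: use max/min of θ
      have hθL : θ L = θ 0 := by rw [hn, hn0]; push_cast; ring
      obtain ⟨t₁, ht₁, hmax⟩ := isCompact_Icc.exists_isMaxOn ⟨0, h0I⟩ hθc.continuousOn
      obtain ⟨t₂, ht₂, hmin⟩ := isCompact_Icc.exists_isMinOn ⟨0, h0I⟩ hθc.continuousOn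
      have hmax' : ∀ x ∈ I, θ x ≤ θ t₁ := fun x hx => hmax hx
      have hmin' : ∀ x ∈ I, θ t₂ ≤ θ x := fun x hx => hmin hx
      -- the oscillation of θ is at least π
      have hMm : Real.pi ≤ θ t₁ - θ t₂ :=
        osc_lemma L hL θ hθc hA hB t₁ t₂ ht₁ ht₂ hmax' hmin'
      have h0m := hmin' 0 h0I
      have h0M := hmax' 0 h0I
      rcases le_total t₁ t₂ with h12 | h21
      · have hsplit : (∫ t in (0:ℝ)..L, |k t|) =
            ((∫ t in (0:ℝ)..t₁, |k t|) + ∫ t in t₁..t₂, |k t|) + ∫ t in t₂..L, |k t| := by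
          rw [intervalIntegral.integral_add_adjacent_intervals (hkabs_int 0 t₁ h0I ht₁)
              (hkabs_int t₁ t₂ ht₁ ht₂),
            intervalIntegral.integral_add_adjacent_intervals (hkabs_int 0 t₂ h0I ht₂)
              (hkabs_int t₂ L ht₂ hLI)]
        have h1 := hKge 0 t₁ h0I ht₁ ht₁.1
        have h2 := hKge t₁ t₂ ht₁ ht₂ h12
        have h3 := hKge t₂ L ht₂ hLI ht₂.2
        have e1 : θ t₁ - θ 0 ≤ |θ t₁ - θ 0| := le_abs_self _
        have e2 : θ t₁ - θ t₂ ≤ |θ t₂ - θ t₁| := by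
          rw [abs_sub_comm]; exact le_abs_self _
        have e3 : θ 0 - θ t₂ ≤ |θ L - θ t₂| := by
          rw [hθL]; exact le_abs_self _
        rw [hsplit]
        linarith
      · have hsplit : (∫ t in (0:ℝ)..L, |k t|) =
            ((∫ t in (0:ℝ)..t₂, |k t|) + ∫ t in t₂..t₁, |k t|) + ∫ t in t₁..L, |k t| := by
          rw [intervalIntegral.integral_add_adjacent_intervals (hkabs_int 0 t₂ h0I ht₂)
              (hkabs_int t₂ t₁ ht₂ ht₁),
            intervalIntegral.integral_add_adjacent_intervals (hkabs_int 0 t₁ h0I ht₁)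
              (hkabs_int t₁ L ht₁ hLI)]
        have h1 := hKge 0 t₂ h0I ht₂ ht₂.1
        have h2 := hKge t₂ t₁ ht₂ ht₁ h21
        have h3 := hKge t₁ L ht₁ hLI ht₁.2
        have e1 : θ 0 - θ t₂ ≤ |θ t₂ - θ 0| := by
          rw [abs_sub_comm]; exact le_abs_self _
        have e2 : θ t₁ - θ t₂ ≤ |θ t₁ - θ t₂| := le_abs_self _
        have e3 : θ t₁ - θ 0 ≤ |θ L - θ t₁| := by
          rw [hθL, abs_sub_comm]; exact le_abs_self _
        rw [hsplit]
        linarith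
    · -- nonzero winding
      have habs : 2 * Real.pi ≤ |θ L - θ 0| := by
        have : θ L - θ 0 = (n : ℝ) * (2 * Real.pi) := by rw [hn]; ring
        rw [this, abs_mul, abs_of_pos (by positivity : (0:ℝ) < 2 * Real.pi)]
        have h1 : (1:ℝ) ≤ |(n:ℝ)| := by
          rw [← Int.cast_abs]
          exact_mod_cast Int.one_le_abs hn0
        nlinarith [Real.pi_pos]
      exact le_trans habs (hKge 0 L h0I hLI hL.le)
  have hfinal : (∫ t in (0:ℝ)..L, ‖v' t‖) = ∫ t in (0:ℝ)..L, |k t| := by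
    apply intervalIntegral.integral_congr
    intro t ht
    rw [huIcc] at ht
    exact hnormk t ht
  rw [hfinal]
  exact hgoal


set_option maxHeartbeats 1000000 in
theorem stmt13 (L : ℝ) (hL : 0 < L) (γ : ℝ → EuclideanSpace ℝ (Fin 2))
    (hsmooth : ContDiffOn ℝ 2 γ (Set.Icc 0 L))
    (harc : ∀ t ∈ Set.Icc (0:ℝ) L, ‖derivWithin γ (Set.Icc 0 L) t‖ = 1)
    (hclosed : γ 0 = γ L)
    (hclosed' : derivWithin γ (Set.Icc 0 L) 0 = derivWithin γ (Set.Icc 0 L) L) :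
    (∀ β : ℝ, 0 < β →
      4 * Real.pi ≤ ∫ t in (0:ℝ)..L,
        (1 / β + β * ‖derivWithin (derivWithin γ (Set.Icc 0 L)) (Set.Icc 0 L) t‖ ^ 2)) ∧
    (4 * Real.pi ≤ ∫ t in (0:ℝ)..L,
        (1 + ‖derivWithin (derivWithin γ (Set.Icc 0 L)) (Set.Icc 0 L) t‖ ^ 2)) ∧
    (4 * Real.pi ^ 2 / L ≤ ∫ t in (0:ℝ)..L,
        ‖derivWithin (derivWithin γ (Set.Icc 0 L)) (Set.Icc 0 L) t‖ ^ 2) := by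
  have hUD : UniqueDiffOn ℝ (Set.Icc (0:ℝ) L) := uniqueDiffOn_Icc hL
  set v : ℝ → E2 := derivWithin γ (Set.Icc 0 L) with hvdef
  have hv : ContDiffOn ℝ 1 v (Set.Icc 0 L) :=
    hsmooth.derivWithin hUD (by norm_num)
  have huIcc : Set.uIcc (0:ℝ) L = Set.Icc 0 L := Set.uIcc_of_le hL.le
  have hvint : IntervalIntegrable v volume 0 L := by
    apply ContinuousOn.intervalIntegrable
    rw [huIcc]; exact hv.continuousOn
  have hzero : (∫ t in (0:ℝ)..L, v t) = 0 := by
    have hftc := intervalIntegral.integral_eq_sub_of_hasDeriv_right_of_le hL.le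
      hsmooth.continuousOn (f' := v) ?_ hvint
    · rw [hftc, ← hclosed, sub_self]
    · intro x hx
      have hxI : x ∈ Set.Icc (0:ℝ) L := Set.Ioo_subset_Icc_self hx
      have h := ((hsmooth.differentiableOn (by norm_num)) x hxI).hasDerivWithinAt
      refine h.mono_of_mem_nhdsWithin ?_
      refine mem_of_superset (Ioc_mem_nhdsGT_of_mem ⟨le_rfl, hx.2⟩) ?_
      intro y hy
      exact ⟨hx.1.le.trans hy.1.le, hy.2⟩
  have hK : 2 * Real.pi ≤ ∫ t in (0:ℝ)..L, ‖derivWithin v (Set.Icc 0 L) t‖ :=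
    key_ineq L hL v hv harc hclosed' hzero
  set f : ℝ → ℝ := fun t => ‖derivWithin v (Set.Icc 0 L) t‖ with hfdef
  have hfc : ContinuousOn f (Set.Icc 0 L) :=
    (hv.continuousOn_derivWithin hUD le_rfl).norm
  have hfint : IntervalIntegrable f volume 0 L := by
    apply ContinuousOn.intervalIntegrable; rwa [huIcc]
  have hf2int : IntervalIntegrable (fun t => f t ^ 2) volume 0 L := by
    apply ContinuousOn.intervalIntegrable; rw [huIcc]; exact hfc.pow 2
  have main1 : ∀ β : ℝ, 0 < β →
      4 * Real.pi ≤ ∫ t in (0:ℝ)..L, (1 / β + β * f t ^ 2) := by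
    intro β hβ
    have hint2 : IntervalIntegrable (fun t => 1 / β + β * f t ^ 2) volume 0 L :=
      (_root_.intervalIntegrable_const).add (hf2int.const_mul β)
    have hmono : (∫ t in (0:ℝ)..L, 2 * f t) ≤ ∫ t in (0:ℝ)..L, (1 / β + β * f t ^ 2) := by
      apply intervalIntegral.integral_mono_on hL.le (hfint.const_mul 2) hint2
      intro t ht
      have hinv : β * (1 / β) = 1 := by field_simp
      nlinarith [sq_nonneg (β * f t - 1), hβ, hinv]
    have h2 : (∫ t in (0:ℝ)..L, 2 * f t) = 2 * ∫ t in (0:ℝ)..L, f t :=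
      intervalIntegral.integral_const_mul 2 f
    linarith [hmono, hK, h2.symm.le]
  refine ⟨main1, ?_, ?_⟩
  · have := main1 1 one_pos
    simpa using this
  · have hπ := Real.pi_pos
    have hβ : (0:ℝ) < L / (2 * Real.pi) := by positivity
    have h := main1 (L / (2 * Real.pi)) hβ
    rw [intervalIntegral.integral_add (_root_.intervalIntegrable_const) (hf2int.const_mul _),
      intervalIntegral.integral_const, intervalIntegral.integral_const_mul] at h
    set A : ℝ := ∫ t in (0:ℝ)..L, f t ^ 2 with hAdef
    have hsimp : (L - 0) • (1 / (L / (2 * Real.pi))) = 2 * Real.pi := by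
      rw [smul_eq_mul, sub_zero, one_div_div]
      field_simp
    rw [hsimp] at h
    -- h : 4π ≤ 2π + (L/(2π)) * A
    rw [div_le_iff₀ hL]
    have h2 : 2 * Real.pi ≤ L / (2 * Real.pi) * A := by linarith
    have h3 : (2 * Real.pi) * (2 * Real.pi) ≤ (2 * Real.pi) * (L / (2 * Real.pi) * A) :=
      mul_le_mul_of_nonneg_left h2 (by positivity)
    have h4 : (2 * Real.pi) * (L / (2 * Real.pi) * A) = A * L := by
      field_simp
    nlinarith [h3, h4]
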